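/- arXiv:2101.08038 — 8 statements merged into one kernel-verified Lean document; each statement's English description precedes it below -/
import Mathlib

section
/- Let q ≥ 3 be a prime power such that q - 1 admits an odd prime divisor ℓ. Then there exists an element a ∈ 𝔽_q such that for every integer m ≥ 0, both polynomials X^(ℓ^m) - a and X^(ℓ^m) - a + 1 are irreducible over 𝔽_q. In particular, (X^(ℓ^m) - a, X^(ℓ^m) - a + 1) is a twin prime pair for each m ≥ 0. -/
open Polynomial

open Finset in
/-- There is an element that is neither an `ℓ`-th power nor an `ℓ`-th power plus one. -/
lemma exists_non_pow (q : ℕ) (hq : 3 ≤ q)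
    (F : Type*) [Field F] [Fintype F] (hcard : Fintype.card F = q)
    (ℓ : ℕ) (hℓ : ℓ.Prime) (hℓodd : Odd ℓ) (hdvd : ℓ ∣ q - 1) :
    ∃ a : F, (∀ b : F, b ^ ℓ ≠ a) ∧ (∀ b : F, b ^ ℓ ≠ a - 1) := by
  classical
  have hℓ3 : 3 ≤ ℓ := by
    rcases hℓ.two_le.lt_or_eq with h | h
    · omega
    · exact absurd hℓodd (by simp [← h])
  -- an element of order ℓ in the unit group, by Cauchy
  have hdvd' : ℓ ∣ Fintype.card Fˣ := by
    rwa [Fintype.card_units, hcard]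
  haveI : Fact ℓ.Prime := ⟨hℓ⟩
  obtain ⟨ζ, hζ⟩ := exists_prime_orderOf_dvd_card ℓ hdvd'
  set T : Finset F := Finset.univ.image (· ^ ℓ) with hT
  have h0T : (0 : F) ∈ T := mem_image.mpr ⟨0, mem_univ _, zero_pow hℓ.ne_zero⟩
  -- each nonzero fiber has at least ℓ elements
  have hfib : ∀ y ∈ T.erase 0, ℓ ≤ (univ.filter (fun x : F => x ^ ℓ = y)).card := by
    intro y hy
    obtain ⟨hy0, hyT⟩ := mem_erase.mp hy
    obtain ⟨x₀, -, hx₀⟩ := mem_image.mp hyT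
    have hx0 : x₀ ≠ 0 := by rintro rfl; exact hy0 (by simpa [zero_pow hℓ.ne_zero] using hx₀.symm)
    have : ∀ i ∈ range ℓ, x₀ * ((ζ : F) ^ i) ∈ univ.filter (fun x : F => x ^ ℓ = y) := by
      intro i _
      simp only [mem_filter, mem_univ, true_and]
      have : (ζ : F) ^ ℓ = 1 := by
        have h1 : ζ ^ ℓ = 1 := by rw [← hζ]; exact pow_orderOf_eq_one ζ
        rw [← Units.val_pow_eq_pow_val, h1, Units.val_one]
      rw [mul_pow, ← pow_mul, mul_comm i ℓ, pow_mul, this, one_pow, mul_one, hx₀]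
    have hinj : Set.InjOn (fun i => x₀ * ((ζ : F) ^ i)) (range ℓ) := by
      intro i hi j hj hij
      simp only at hij
      have hzc : (ζ : F) ^ i = (ζ : F) ^ j := by
        field_simp at hij
        tauto
      have : (ζ : F) ^ i = ((ζ ^ i : Fˣ) : F) := by push_cast; ring
      have hz' : (ζ ^ i : Fˣ) = ζ ^ j := Units.ext (by push_cast; exact hzc)
      exact pow_injOn_Iio_orderOf (x := ζ)
        (by simpa [hζ] using mem_range.mp hi) (by simpa [hζ] using mem_range.mp hj) hz'
    calc ℓ = (range ℓ).card := (card_range ℓ).symm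
    _ ≤ _ := Finset.card_le_card_of_injOn _ this hinj
  -- counting: q = sum of fiber sizes over T
  have hsum : q = ∑ y ∈ T, (univ.filter (fun x : F => x ^ ℓ = y)).card := by
    rw [← hcard, ← Finset.card_univ]
    exact card_eq_sum_card_fiberwise (fun x _ => mem_image.mpr ⟨x, mem_univ _, rfl⟩)
  have hTbound : (T.card - 1) * ℓ + 1 ≤ q := by
    have h1T : 1 ≤ (univ.filter (fun x : F => x ^ ℓ = (0:F))).card := by
      exact card_pos.mpr ⟨0, mem_filter.mpr ⟨mem_univ _, zero_pow hℓ.ne_zero⟩⟩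
    calc (T.card - 1) * ℓ + 1 = (T.erase 0).card * ℓ + 1 := by rw [card_erase_of_mem h0T]
    _ ≤ (∑ y ∈ T.erase 0, (univ.filter (fun x : F => x ^ ℓ = y)).card) + 1 := by
        gcongr
        calc (T.erase 0).card * ℓ = ∑ _y ∈ T.erase 0, ℓ := by rw [sum_const, smul_eq_mul]
        _ ≤ _ := Finset.sum_le_sum hfib
    _ ≤ (∑ y ∈ T.erase 0, (univ.filter (fun x : F => x ^ ℓ = y)).card) +
          (univ.filter (fun x : F => x ^ ℓ = (0:F))).card := by gcongr
    _ = ∑ y ∈ T, (univ.filter (fun x : F => x ^ ℓ = y)).card := by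
        rw [Finset.sum_erase_add _ _ h0T]
    _ = q := hsum.symm
  -- the bad set
  set Bad : Finset F := T ∪ (T.erase 0).image (· + 1) with hBad
  have hBadcard : Bad.card < q := by
    have h1 : Bad.card ≤ T.card + (T.card - 1) := by
      calc Bad.card ≤ T.card + ((T.erase 0).image (· + 1)).card := card_union_le _ _
      _ ≤ T.card + (T.erase 0).card := add_le_add le_rfl card_image_le
      _ = T.card + (T.card - 1) := by rw [card_erase_of_mem h0T]
    have ht1 : 1 ≤ T.card := card_pos.mpr ⟨0, h0T⟩
    have := hTbound
    nlinarith [Nat.sub_add_cancel ht1]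
  obtain ⟨a, -, ha⟩ : ∃ a ∈ univ, a ∉ Bad := by
    by_contra h
    push_neg at h
    have : (univ : Finset F) ⊆ Bad := fun x hx => h x hx
    have := card_le_card this
    rw [Finset.card_univ, hcard] at this
    omega
  refine ⟨a, fun b hb => ha ?_, fun b hb => ?_⟩
  · exact mem_union_left _ (mem_image.mpr ⟨b, mem_univ _, hb⟩)
  · -- b ^ ℓ = a - 1; if b ^ ℓ = 0 then a = 1 ∈ T; else a ∈ image
    by_cases hb0 : b ^ ℓ = 0
    · apply ha
      have : a = 1 := by rw [hb0] at hb; linear_combination -hb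
      exact mem_union_left _ (this ▸ mem_image.mpr ⟨1, mem_univ _, one_pow ℓ⟩)
    · apply ha
      refine mem_union_right _ (mem_image.mpr ⟨b ^ ℓ, ?_, by rw [hb]; ring⟩)
      exact mem_erase.mpr ⟨hb0, mem_image.mpr ⟨b, mem_univ _, rfl⟩⟩

/-- Hall's construction: if `q - 1` has an odd prime divisor `ℓ`, then there is `a ∈ 𝔽_q`
such that for every `m ≥ 0` both `X^(ℓ^m) - a` and `X^(ℓ^m) - a + 1` are (monic) irreducible,
i.e., they form a twin prime pair. -/
theorem twin_primes_of_odd_prime_divisor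
    (q : ℕ) (hq : 3 ≤ q) (hq' : IsPrimePow q)
    (F : Type*) [Field F] [Fintype F] (hcard : Fintype.card F = q)
    (ℓ : ℕ) (hℓ : ℓ.Prime) (hℓodd : Odd ℓ) (hdvd : ℓ ∣ q - 1) :
    ∃ a : F, ∀ m : ℕ,
      ((X ^ ℓ ^ m - C a : F[X]).Monic ∧ Irreducible (X ^ ℓ ^ m - C a : F[X])) ∧
      ((X ^ ℓ ^ m - C a + 1 : F[X]).Monic ∧
        Irreducible (X ^ ℓ ^ m - C a + 1 : F[X])) := by
  obtain ⟨a, ha, ha'⟩ := exists_non_pow q hq F hcard ℓ hℓ hℓodd hdvd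
  have hpow : ∀ m : ℕ, ℓ ^ m ≠ 0 := fun m => pow_ne_zero m hℓ.ne_zero
  have key : ∀ m : ℕ, ∀ p : ℕ, p.Prime → p ∣ ℓ ^ m → p = ℓ := by
    intro m p hp hpd
    exact (Nat.prime_dvd_prime_iff_eq hp hℓ).mp (hp.dvd_of_dvd_pow hpd)
  refine ⟨a, fun m => ⟨⟨monic_X_pow_sub_C a (hpow m), ?_⟩, ?_, ?_⟩⟩
  · exact X_pow_sub_C_irreducible_of_odd (hℓodd.pow) (fun p hp hpd b => key m p hp hpd ▸ ha b)
  · have : (X ^ ℓ ^ m - C a + 1 : F[X]) = X ^ ℓ ^ m - C (a - 1) := by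
      rw [map_sub, map_one]; ring
    rw [this]
    exact monic_X_pow_sub_C _ (hpow m)
  · have : (X ^ ℓ ^ m - C a + 1 : F[X]) = X ^ ℓ ^ m - C (a - 1) := by
      rw [map_sub, map_one]; ring
    rw [this]
    exact X_pow_sub_C_irreducible_of_odd (hℓodd.pow) (fun p hp hpd b => key m p hp hpd ▸ ha' b)
end

section
/- Let q ≥ 3 be a prime power and let ℓ be an odd prime dividing q - 1. Then there exists a ∈ 𝔽_q with a ≠ 0 and a - 1 ≠ 0 such that neither a nor a - 1 is an ℓth power of an element of 𝔽_q (equivalently, a ∉ (𝔽_q^×)^ℓ and a - 1 ∉ (𝔽_q^×)^ℓ). -/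
open Finset Subgroup


/-- Pigeonhole step: if `ℓ` is an odd prime dividing `q - 1`, then there are two consecutive
nonzero elements `a, a - 1` of `𝔽_q`, neither of which is an `ℓ`-th power. -/
theorem exists_consecutive_nonpowers
    (q : ℕ) (hq : 3 ≤ q) (hq' : IsPrimePow q)
    (F : Type*) [Field F] [Fintype F] (hcard : Fintype.card F = q)
    (ℓ : ℕ) (hℓ : ℓ.Prime) (hℓodd : Odd ℓ) (hdvd : ℓ ∣ q - 1) :
    ∃ a : F, a ≠ 0 ∧ a - 1 ≠ 0 ∧
      (¬ ∃ b : F, b ^ ℓ = a) ∧ (¬ ∃ b : F, b ^ ℓ = a - 1) := by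
  classical
  have hℓ3 : 3 ≤ ℓ := by
    have h2 := hℓ.two_le
    rcases Nat.lt_or_ge ℓ 3 with h | h
    · interval_cases ℓ
      · exact absurd hℓodd (by decide)
    · exact h
  have hq1 : 2 ≤ q - 1 := by omega
  set m : ℕ := (q - 1) / ℓ with hm_def
  have hm : ℓ * m = q - 1 := Nat.mul_div_cancel' hdvd
  have hm1 : 1 ≤ m := by
    rcases Nat.eq_zero_or_pos m with h | h
    · rw [h, mul_zero] at hm; omega
    · exact h
  have hcardu : Nat.card Fˣ = q - 1 := by
    rw [Nat.card_units, Nat.card_eq_fintype_card, hcard]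
  -- the power map on units
  set φ : Fˣ →* Fˣ := powMonoidHom ℓ with hφ_def
  -- cardinality of the kernel is ℓ
  obtain ⟨g, hg⟩ := IsCyclic.exists_generator (α := Fˣ)
  have hog : orderOf g = q - 1 := by
    rw [orderOf_eq_card_of_forall_mem_zpowers hg]; exact hcardu
  have hger : orderOf (g ^ m) = ℓ := by
    have hgcd : (q - 1).gcd m = m := Nat.gcd_eq_right ⟨ℓ, by rw [← hm]; ring⟩
    rw [orderOf_pow, hog, hgcd, ← hm]
    exact Nat.mul_div_cancel ℓ (by omega)
  have hker_ge : ℓ ≤ Nat.card (φ.ker) := by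
    have hle : zpowers (g ^ m) ≤ φ.ker := by
      intro x hx
      obtain ⟨k, rfl⟩ := hx
      have h1 : (g ^ m) ^ ℓ = 1 := by rw [← hger]; exact pow_orderOf_eq_one _
      simp only [MonoidHom.mem_ker, hφ_def, powMonoidHom_apply]
      rw [← zpow_natCast, ← zpow_mul, mul_comm, zpow_mul, zpow_natCast, h1, one_zpow]
    calc ℓ = Nat.card (zpowers (g ^ m)) := by
            rw [Nat.card_zpowers, hger]
      _ ≤ Nat.card φ.ker := Subgroup.card_le_of_le hle
  have hker_le : Nat.card (φ.ker) ≤ ℓ := by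
    have h1 : Nat.card (φ.ker) = #{x : Fˣ | x ^ ℓ = 1} := by
      rw [Nat.card_eq_fintype_card, Fintype.card_subtype]
      congr 1
      ext x
      simp [MonoidHom.mem_ker, hφ_def]
    rw [h1]
    exact IsCyclic.card_pow_eq_one_le (by omega)
  have hker : Nat.card (φ.ker) = ℓ := le_antisymm hker_le hker_ge
  -- cardinality of the range is m
  have hrange : Nat.card (φ.range) = m := by
    have h1 := Subgroup.card_eq_card_quotient_mul_card_subgroup φ.ker
    have h2 : Nat.card (Fˣ ⧸ φ.ker) = Nat.card φ.range :=
      Nat.card_congr (QuotientGroup.quotientKerEquivRange φ).toEquiv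
    rw [h2, hker, hcardu] at h1
    nlinarith [Nat.card φ.range]
  -- finsets of nonzero powers and nonzero nonpowers in F
  set Pfin : Finset F := univ.filter fun a => a ≠ 0 ∧ ∃ b : F, b ^ ℓ = a with hPfin_def
  set Nfin : Finset F := univ.filter fun a => a ≠ 0 ∧ ¬ ∃ b : F, b ^ ℓ = a with hNfin_def
  have hPcard : Pfin.card = m := by
    have himg : Pfin = univ.image (fun u : Fˣ => ((u ^ ℓ : Fˣ) : F)) := by
      ext a
      simp only [hPfin_def, mem_filter, mem_univ, true_and, mem_image]
      constructor
      · rintro ⟨ha0, b, rfl⟩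
        have hb : b ≠ 0 := fun h => ha0 (by rw [h]; exact zero_pow (by omega))
        exact ⟨Units.mk0 b hb, by simp⟩
      · rintro ⟨u, rfl⟩
        exact ⟨by simp [pow_ne_zero], (u : F), by simp⟩
    rw [himg]
    have hcomp : (fun u : Fˣ => ((u ^ ℓ : Fˣ) : F)) = Units.val ∘ φ := by
      ext u; simp [hφ_def]
    rw [hcomp, ← Finset.image_image, Finset.card_image_of_injective _ Units.val_injective]
    have h3 : (univ.image φ) = (φ.range : Set Fˣ).toFinset := by
      ext x
      rw [Set.mem_toFinset]
      simp [MonoidHom.mem_range, eq_comm]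
    rw [h3, Set.toFinset_card, ← Nat.card_eq_fintype_card]
    exact hrange
  have hNcard : Nfin.card = (q - 1) - m := by
    have hsplit : Pfin.card + Nfin.card = (univ.filter fun a : F => a ≠ 0).card := by
      rw [hPfin_def, hNfin_def]
      rw [show (univ.filter fun a : F => a ≠ 0 ∧ ∃ b : F, b ^ ℓ = a)
            = (univ.filter fun a : F => a ≠ 0).filter (fun a => ∃ b : F, b ^ ℓ = a) by
          rw [Finset.filter_filter]]
      rw [show (univ.filter fun a : F => a ≠ 0 ∧ ¬ ∃ b : F, b ^ ℓ = a)
            = (univ.filter fun a : F => a ≠ 0).filter (fun a => ¬ ∃ b : F, b ^ ℓ = a) by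
          rw [Finset.filter_filter]]
      exact Finset.card_filter_add_card_filter_not _
    have hne : (univ.filter fun a : F => a ≠ 0).card = q - 1 := by
      rw [Finset.filter_ne', Finset.card_erase_of_mem (mem_univ _), Finset.card_univ, hcard]
    omega
  -- now the pigeonhole argument
  by_contra hcon
  push_neg at hcon
  have key : ∀ a ∈ Nfin, a - 1 ∈ Pfin := by
    intro a ha
    rw [hNfin_def, mem_filter] at ha
    obtain ⟨-, ha0, hanp⟩ := ha
    have ha1 : a ≠ 1 := by
      rintro rfl
      exact hanp ⟨1, one_pow ℓ⟩
    have hsub : a - 1 ≠ 0 := sub_ne_zero.mpr ha1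
    rw [hPfin_def, mem_filter]
    exact ⟨mem_univ _, hsub, hcon a ha0 hsub (fun b hb => hanp ⟨b, hb⟩)⟩
  have hinj : Nfin.card ≤ Pfin.card := by
    apply Finset.card_le_card_of_injOn (fun a => a - 1) key
    intro a _ b _ hab
    simpa using sub_left_injective hab
  have h3m : 3 * m ≤ q - 1 := by
    calc 3 * m ≤ ℓ * m := Nat.mul_le_mul_right m hℓ3
      _ = q - 1 := hm
  omega
end

section
/- (Lemma A) Let p be an odd prime, let ℓ be a prime not dividing p - 1, and fix an integer m ≥ 0. If the polynomial X^(pℓ^m) - X^(ℓ^m) - 1 is irreducible over 𝔽_p, then for every a ∈ 𝔽_p^× the polynomial X^(pℓ^m) - X^(ℓ^m) + a is irreducible over 𝔽_p. -/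
open Polynomial

/-- Lemma A: if `ℓ` is a prime not dividing `p - 1` and `X^(pℓ^m) - X^(ℓ^m) - 1` is
irreducible over `𝔽_p`, then `X^(pℓ^m) - X^(ℓ^m) + a` is irreducible over `𝔽_p` for every
`a ∈ 𝔽_p^×`. -/
theorem lemmaA
    (p : ℕ) [Fact p.Prime] (hpodd : Odd p)
    (ℓ : ℕ) (hℓ : ℓ.Prime) (hnd : ¬ ℓ ∣ p - 1) (m : ℕ)
    (h : Irreducible (X ^ (p * ℓ ^ m) - X ^ ℓ ^ m - 1 : (ZMod p)[X])) :
    ∀ a : (ZMod p)ˣ,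
      Irreducible (X ^ (p * ℓ ^ m) - X ^ ℓ ^ m + C (a : ZMod p) : (ZMod p)[X]) := by
  intro a
  set n := ℓ ^ m with hn
  -- coprimality of n with the group order p - 1
  have hcard : Nat.card (ZMod p)ˣ = p - 1 := by
    rw [Nat.card_eq_fintype_card, ZMod.card_units_eq_totient,
      Nat.totient_prime (Fact.out : p.Prime)]
  have hcop : (Nat.card (ZMod p)ˣ).Coprime n := by
    rw [hcard]
    exact (Nat.Coprime.pow_right m ((hℓ.coprime_iff_not_dvd.mpr hnd).symm))
  -- find a unit d with d ^ n = -a⁻¹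
  obtain ⟨d, hd⟩ := (powCoprime hcop).surjective (-a⁻¹)
  rw [powCoprime_apply] at hd
  set c : ZMod p := (d : ZMod p) with hc
  have hdc : c ^ n * (a : ZMod p) = -1 := by
    have := congrArg (fun u : (ZMod p)ˣ => (u : ZMod p)) hd
    simp only [Units.val_pow_eq_pow_val, Units.val_neg] at this
    rw [hc, this]
    field_simp
    rw [Units.inv_mul]
  have hcu : IsUnit c := d.isUnit
  have : Invertible c := d.invertible
  -- the substitution automorphism X ↦ c • X
  let e : (ZMod p)[X] ≃ₐ[ZMod p] (ZMod p)[X] := algEquivCMulXAddC c 0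
  have hcp : c ^ p = c := ZMod.pow_card c
  have key : e (X ^ (p * n) - X ^ n - 1) =
      C (c ^ n) * (X ^ (p * n) - X ^ n + C (a : ZMod p)) := by
    have h1 : c ^ (p * n) = c ^ n := by rw [pow_mul, hcp]
    simp only [e, algEquivCMulXAddC_apply, map_zero, add_zero, map_sub, map_pow, map_one,
      aeval_X]
    rw [mul_pow, mul_pow, ← C_pow, ← C_pow, h1, mul_add, ← C_mul, hdc, map_neg, map_one]
    ring
  have h2 : Irreducible (e (X ^ (p * n) - X ^ n - 1)) :=
    (MulEquiv.irreducible_iff e.toRingEquiv.toMulEquiv).mpr h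
  rw [key] at h2
  exact (irreducible_isUnit_mul (by simpa using (hcu.pow n).map C)).mp h2
end

section
/- (Lemma B, first part) Let p be an odd prime, let e be the multiplicative order of any root of f(X) = X^p - X - 1 in an algebraic closure of 𝔽_p, and let ℓ be an odd prime dividing e. Fix an integer m ≥ 0 and let β be any root of f(X^(ℓ^m)) = X^(pℓ^m) - X^(ℓ^m) - 1 in an algebraic closure of 𝔽_p. Then the multiplicative order of β equals e·ℓ^m. -/
open Polynomial

/-- Lemma B, first part: if `e` is the multiplicative order of a root of `X^p - X - 1`
over `𝔽_p`, `ℓ` is an odd prime dividing `e`, and `β` is a root of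
`X^(pℓ^m) - X^(ℓ^m) - 1` in an algebraic closure of `𝔽_p`, then `orderOf β = e * ℓ^m`. -/
theorem lemmaB_order
    (p : ℕ) [Fact p.Prime] (hpodd : Odd p)
    (α : AlgebraicClosure (ZMod p)) (hα : α ^ p - α - 1 = 0)
    (e : ℕ) (he : e = orderOf α)
    (ℓ : ℕ) (hℓ : ℓ.Prime) (hℓodd : Odd ℓ) (hdvd : ℓ ∣ e)
    (m : ℕ) (β : AlgebraicClosure (ZMod p))
    (hβ : β ^ (p * ℓ ^ m) - β ^ ℓ ^ m - 1 = 0) :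
    orderOf β = e * ℓ ^ m := by
  classical
  have hp : p.Prime := Fact.out
  -- every nonzero element of the algebraic closure has finite order
  have hfin : ∀ x : AlgebraicClosure (ZMod p), x ≠ 0 → IsOfFinOrder x := by
    intro x hx
    have hint : IsIntegral (ZMod p) x := Algebra.IsIntegral.isIntegral x
    haveI : FiniteDimensional (ZMod p) (IntermediateField.adjoin (ZMod p) {x}) :=
      IntermediateField.adjoin.finiteDimensional hint
    haveI : Finite (IntermediateField.adjoin (ZMod p) {x}) :=
      Module.finite_of_finite (ZMod p)
    haveI : Fintype (IntermediateField.adjoin (ZMod p) {x}) := Fintype.ofFinite _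
    have hmem : x ∈ IntermediateField.adjoin (ZMod p) {x} :=
      IntermediateField.mem_adjoin_simple_self (ZMod p) x
    set y : IntermediateField.adjoin (ZMod p) {x} := ⟨x, hmem⟩ with hy
    have hy0 : y ≠ 0 := by
      intro h
      exact hx (by simpa [hy, Subtype.ext_iff] using h)
    have hcard : 0 < Fintype.card (IntermediateField.adjoin (ZMod p) {x}) - 1 := by
      have := Fintype.one_lt_card (α := IntermediateField.adjoin (ZMod p) {x})
      omega
    have hpow : y ^ (Fintype.card (IntermediateField.adjoin (ZMod p) {x}) - 1) = 1 :=
      FiniteField.pow_card_sub_one_eq_one y hy0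
    refine isOfFinOrder_iff_pow_eq_one.mpr
      ⟨Fintype.card (IntermediateField.adjoin (ZMod p) {x}) - 1, hcard, ?_⟩
    have := congrArg Subtype.val hpow
    simpa using this
  have hq0 : ℓ ^ m ≠ 0 := pow_ne_zero _ hℓ.pos.ne'
  have hα0 : α ≠ 0 := by
    rintro rfl
    rw [zero_pow hp.ne_zero] at hα
    simp at hα
  have hβ0 : β ≠ 0 := by
    rintro rfl
    rw [zero_pow (Nat.mul_ne_zero hp.ne_zero hq0), zero_pow hq0] at hβ
    simp at hβ
  have hγ : (β ^ ℓ ^ m) ^ p - β ^ ℓ ^ m - 1 = 0 := by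
    rw [← pow_mul']
    exact hβ
  have hαp : α ^ p = α + 1 := by linear_combination hα
  have hγp : (β ^ ℓ ^ m) ^ p = β ^ ℓ ^ m + 1 := by linear_combination hγ
  -- δ = γ - α is fixed by Frobenius, hence lies in the prime field
  have hδ : (β ^ ℓ ^ m - α) ^ p = β ^ ℓ ^ m - α := by
    rw [sub_pow_char, hαp, hγp]; ring
  obtain ⟨c, hc⟩ : ∃ c : ZMod p,
      algebraMap (ZMod p) (AlgebraicClosure (ZMod p)) c = β ^ ℓ ^ m - α := by
    have hsplits : ((X : (ZMod p)[X]) ^ p - X).Splits := by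
      rw [splits_iff_card_roots]
      have hroots := FiniteField.roots_X_pow_card_sub_X (ZMod p)
      rw [ZMod.card] at hroots
      have hdeg : ((X : (ZMod p)[X]) ^ p - X).natDegree = p := by
        simpa [ZMod.card] using FiniteField.X_pow_card_sub_X_natDegree_eq (ZMod p) hp.one_lt
      rw [hroots, hdeg]
      simp [ZMod.card]
    have hmaproots := hsplits.roots_map (algebraMap (ZMod p) (AlgebraicClosure (ZMod p)))
    have hδmem : β ^ ℓ ^ m - α ∈
        (((X : (ZMod p)[X]) ^ p - X).map
          (algebraMap (ZMod p) (AlgebraicClosure (ZMod p)))).roots := by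
      refine mem_roots'.mpr ⟨?_, ?_⟩
      · refine Polynomial.map_ne_zero ?_
        simpa [ZMod.card] using FiniteField.X_pow_card_sub_X_ne_zero (ZMod p) hp.one_lt
      · simp [IsRoot, hδ]
    rw [hmaproots] at hδmem
    obtain ⟨c, _, hc⟩ := Multiset.mem_map.mp hδmem
    exact ⟨c, hc⟩
  -- Frobenius iterates
  have hfrobiter : ∀ k : ℕ,
      (⇑(frobenius (AlgebraicClosure (ZMod p)) p))^[k] α = α + (k : AlgebraicClosure (ZMod p)) := by
    intro k
    induction k with
    | zero => simp
    | succ k ih =>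
      rw [Function.iterate_succ_apply', ih, frobenius_def, add_pow_char, hαp]
      have hk : ((k : ℕ) : AlgebraicClosure (ZMod p)) ^ p = ((k : ℕ) : AlgebraicClosure (ZMod p)) := by
        rw [← frobenius_def]
        exact map_natCast (frobenius (AlgebraicClosure (ZMod p)) p) k
      rw [hk]
      push_cast
      ring
  have horder_iter : ∀ k : ℕ,
      orderOf ((⇑(frobenius (AlgebraicClosure (ZMod p)) p))^[k] α) = orderOf α := by
    intro k
    induction k with
    | zero => simp
    | succ k ih =>
      rw [Function.iterate_succ_apply', ← ih]
      exact orderOf_injective (frobenius (AlgebraicClosure (ZMod p)) p).toMonoidHom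
        (frobenius (AlgebraicClosure (ZMod p)) p).injective _
  have hγα : β ^ ℓ ^ m = α + ((c.val : ℕ) : AlgebraicClosure (ZMod p)) := by
    have hcast : algebraMap (ZMod p) (AlgebraicClosure (ZMod p)) c
        = ((c.val : ℕ) : AlgebraicClosure (ZMod p)) := by
      rw [← map_natCast (algebraMap (ZMod p) (AlgebraicClosure (ZMod p))) c.val]
      congr 1
      simp
    rw [← hcast, hc]; ring
  have hγe : orderOf (β ^ ℓ ^ m) = e := by
    rw [he, hγα, ← hfrobiter c.val, horder_iter]
  -- group-theoretic conclusion
  have hnfin : IsOfFinOrder β := hfin β hβ0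
  have hnpos : 0 < orderOf β := hnfin.orderOf_pos
  have hord : e = orderOf β / Nat.gcd (orderOf β) (ℓ ^ m) := by
    rw [← hγe, orderOf_pow' β hq0]
  have hgdvd : Nat.gcd (orderOf β) (ℓ ^ m) ∣ orderOf β := Nat.gcd_dvd_left _ _
  have hneg : orderOf β = e * Nat.gcd (orderOf β) (ℓ ^ m) := by
    rw [hord, Nat.div_mul_cancel hgdvd]
  obtain ⟨k, hkm, hgk⟩ := (Nat.dvd_prime_pow hℓ).mp (Nat.gcd_dvd_right (orderOf β) (ℓ ^ m))
  rw [hgk] at hneg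
  have hkm' : k = m := by
    by_contra hne
    have hklt : k < m := lt_of_le_of_ne hkm hne
    have h1 : ℓ ^ (k + 1) ∣ orderOf β := by
      rw [hneg, pow_succ']
      exact mul_dvd_mul hdvd dvd_rfl
    have h2 : ℓ ^ (k + 1) ∣ ℓ ^ m := pow_dvd_pow ℓ hklt
    have h3 : ℓ ^ (k + 1) ∣ Nat.gcd (orderOf β) (ℓ ^ m) := Nat.dvd_gcd h1 h2
    rw [hgk] at h3
    have hle := Nat.le_of_dvd (pow_pos hℓ.pos k) h3
    have hlt : ℓ ^ k < ℓ ^ (k + 1) := pow_lt_pow_right₀ hℓ.one_lt (by omega)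
    omega
  rw [hkm'] at hneg
  exact hneg
end

section
/- Let p be an odd prime, let e be the multiplicative order of any root of f(X) = X^p - X - 1 in an algebraic closure of 𝔽_p, set Q = (p^p - 1)/(p - 1), and let ℓ be an odd prime dividing e. Then for every integer m ≥ 0, p^(p·ℓ^m) ≡ 1 + (p-1)·Q·ℓ^m (mod e·ℓ^(m+1)). -/
/-- `(1+t)^n ≡ 1 + n·t + C(n,2)·t² (mod t³)` over `ℤ`. -/
lemma binom_three (t : ℤ) (n : ℕ) :
    (1 + t) ^ n ≡ 1 + n * t + (n.choose 2) * t ^ 2 [ZMOD t ^ 3] := by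
  induction n with
  | zero => simp
  | succ n ih =>
    have hch : (((n + 1).choose 2 : ℕ) : ℤ) = (n.choose 2 : ℤ) + n := by
      rw [Nat.choose_succ_succ]
      push_cast [Nat.choose_one_right]
      ring
    calc (1 + t) ^ (n + 1) = (1 + t) ^ n * (1 + t) := pow_succ _ _
      _ ≡ (1 + n * t + (n.choose 2) * t ^ 2) * (1 + t) [ZMOD t ^ 3] := ih.mul_right _
      _ ≡ 1 + (n + 1 : ℕ) * t + ((n + 1).choose 2) * t ^ 2 [ZMOD t ^ 3] := by
        rw [Int.modEq_iff_dvd]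
        refine ⟨-(n.choose 2 : ℤ), ?_⟩
        push_cast [hch]
        ring

/-- The key inductive step. -/
lemma step_congr (E L c x : ℤ) (l : ℕ) (hl : l.Prime) (hlodd : Odd l)
    (hlE : (l : ℤ) ∣ E) (hEc : E ∣ c)
    (hx : x ≡ 1 + c * L [ZMOD E * L * l]) :
    x ^ l ≡ 1 + c * (L * l) [ZMOD E * (L * l) * l] := by
  obtain ⟨u, hu⟩ := hlE
  obtain ⟨d, hd⟩ := hEc
  obtain ⟨k, hk⟩ := (Int.modEq_iff_dvd.mp hx)
  -- x = 1 + t with t := c*L + (E*L*l)*k' where k' = -k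
  set t : ℤ := c * L - E * L * l * k with ht
  have hxt : x = 1 + t := by rw [ht]; linarith [hk]
  have hts : t = E * L * (d - l * k) := by rw [ht, hd]; ring
  -- choose l 2 is divisible by l
  have h2l : 2 < l := by
    have hne : l ≠ 2 := by rintro rfl; simp [Nat.odd_iff] at hlodd
    exact lt_of_le_of_ne hl.two_le (Ne.symm hne)
  obtain ⟨v, hv⟩ := Nat.Prime.dvd_choose_self hl (by norm_num) h2l
  have hv' : ((l.choose 2 : ℕ) : ℤ) = (l : ℤ) * v := by exact_mod_cast congrArg (Nat.cast (R := ℤ)) hv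
  set M : ℤ := E * (L * l) * l with hM
  -- step 1 : x^l ≡ 1 + l*t + C t^2  mod M
  have hM3 : M ∣ t ^ 3 := by
    refine ⟨u ^ 2 * L ^ 2 * (d - l * k) ^ 3, ?_⟩
    rw [hts, hM, hu]; ring
  have h1 : x ^ l ≡ 1 + l * t + (l.choose 2) * t ^ 2 [ZMOD M] := by
    rw [hxt]
    exact (binom_three t l).of_dvd hM3
  -- step 2 : the middle expression ≡ 1 + c*(L*l)  mod M
  have h2 : (1 : ℤ) + l * t + (l.choose 2) * t ^ 2 ≡ 1 + c * (L * l) [ZMOD M] := by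
    rw [Int.modEq_iff_dvd]
    refine ⟨k - v * u * L * (d - l * k) ^ 2, ?_⟩
    rw [hM, hv', hts, hd, hu]; ring
  exact h1.trans h2

/-- Key congruence: with `e` the multiplicative order of a root of `X^p - X - 1` over `𝔽_p`,
`Q = (p^p - 1)/(p - 1)`, and `ℓ` an odd prime dividing `e`, one has
`p^(p·ℓ^m) ≡ 1 + (p-1)·Q·ℓ^m (mod e·ℓ^(m+1))` for every `m ≥ 0`. -/
theorem key_congruence
    (p : ℕ) [Fact p.Prime] (hpodd : Odd p)
    (α : AlgebraicClosure (ZMod p)) (hα : α ^ p - α - 1 = 0)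
    (e : ℕ) (he : e = orderOf α)
    (ℓ : ℕ) (hℓ : ℓ.Prime) (hℓodd : Odd ℓ) (hdvd : ℓ ∣ e) (m : ℕ) :
    p ^ (p * ℓ ^ m) ≡
      1 + (p - 1) * ((p ^ p - 1) / (p - 1)) * ℓ ^ m [MOD e * ℓ ^ (m + 1)] := by
  have hp := Fact.out (p := p.Prime)
  have hαp : α ^ p = α + 1 := by linear_combination hα
  -- Frobenius iteration
  have hfrob : ∀ k : ℕ, α ^ p ^ k = α + k := by
    intro k
    induction k with
    | zero => simp
    | succ k ih =>
      have hcast : ((k : AlgebraicClosure (ZMod p))) ^ p = (k : AlgebraicClosure (ZMod p)) := by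
        rw [show ((k : AlgebraicClosure (ZMod p))) = algebraMap (ZMod p) (AlgebraicClosure (ZMod p)) ((k : ℕ) : ZMod p) by push_cast; rfl,
          ← map_pow, ZMod.pow_card]
      rw [pow_succ, pow_mul, ih, add_pow_char, hαp, hcast]
      push_cast
      ring
  have hpp : α ^ p ^ p = α := by
    rw [hfrob p]
    simp
  have hα0 : α ≠ 0 := by
    intro h
    rw [h, zero_pow hp.ne_zero] at hα
    simp at hα
  have hone : (1 : ℕ) ≤ p ^ p := Nat.one_le_pow _ _ hp.pos
  have h1 : α ^ (p ^ p - 1) = 1 := by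
    have hmul : α ^ (p ^ p - 1) * α = 1 * α := by
      rw [← pow_succ, Nat.sub_add_cancel hone, hpp, one_mul]
    exact mul_right_cancel₀ hα0 hmul
  have hedvd : e ∣ p ^ p - 1 := he ▸ orderOf_dvd_of_pow_eq_one h1
  have hd1 : (p - 1) ∣ (p ^ p - 1) := by
    simpa using Nat.sub_dvd_pow_sub_pow p 1 p
  have hQ : (p - 1) * ((p ^ p - 1) / (p - 1)) = p ^ p - 1 := Nat.mul_div_cancel' hd1
  have hcastpp : ((p ^ p - 1 : ℕ) : ℤ) = (p : ℤ) ^ p - 1 := by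
    push_cast [Nat.cast_sub hone]
    ring
  have hedvdZ : (e : ℤ) ∣ (p : ℤ) ^ p - 1 := by
    rw [← hcastpp]; exact_mod_cast hedvd
  have hldvdZ : (ℓ : ℤ) ∣ (e : ℤ) := by exact_mod_cast hdvd
  -- main induction, over ℤ
  have key : ∀ n : ℕ, (p : ℤ) ^ (p * ℓ ^ n) ≡
      1 + ((p : ℤ) ^ p - 1) * ℓ ^ n [ZMOD (e : ℤ) * ℓ ^ (n + 1)] := by
    intro n
    induction n with
    | zero =>
      simp only [pow_zero, mul_one]
      rw [show (1:ℤ) + ((p:ℤ)^p - 1) = (p:ℤ)^p by ring]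
    | succ n ih =>
      have hstep := step_congr (e : ℤ) ((ℓ : ℤ) ^ n) ((p : ℤ) ^ p - 1)
        ((p : ℤ) ^ (p * ℓ ^ n)) ℓ hℓ hℓodd hldvdZ hedvdZ
        (by rw [show (e : ℤ) * (ℓ : ℤ) ^ n * ℓ = (e : ℤ) * ℓ ^ (n + 1) by ring]; exact ih)
      have hx : ((p : ℤ) ^ (p * ℓ ^ n)) ^ ℓ = (p : ℤ) ^ (p * ℓ ^ (n + 1)) := by
        rw [← pow_mul, pow_succ]
        ring_nf
      rw [hx] at hstep
      have hmod : (e : ℤ) * ((ℓ : ℤ) ^ n * ℓ) * ℓ = (e : ℤ) * ℓ ^ (n + 1 + 1) := by ring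
      have hrhs : (1 : ℤ) + ((p : ℤ) ^ p - 1) * ((ℓ : ℤ) ^ n * ℓ) =
          1 + ((p : ℤ) ^ p - 1) * ℓ ^ (n + 1) := by ring
      rw [hmod, hrhs] at hstep
      exact hstep
  -- convert back to ℕ
  rw [hQ, Nat.modEq_iff_dvd]
  have := (key m).dvd
  push_cast [Nat.cast_sub hone] at this ⊢
  exact this
end

section
/- (Theorem, part 1) Let p be an odd prime, let e be the multiplicative order of any root of f(X) = X^p - X - 1 in an algebraic closure of 𝔽_p, and let ℓ be an odd prime dividing e such that ℓ does not divide (p^p - 1)/e. Then for every integer m ≥ 0 and every a ∈ 𝔽_p^×, the polynomial f_a(X^(ℓ^m)) = X^(pℓ^m) - X^(ℓ^m) + a is irreducible over 𝔽_p. In particular, for each m ≥ 0 the tuple (f_1(X^(ℓ^m)), f_2(X^(ℓ^m)), …, f_{p-1}(X^(ℓ^m))) consists of p - 1 monic irreducible polynomials of common odd degree p·ℓ^m, any two of which differ by a nonzero constant. -/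
open Polynomial

open IntermediateField

lemma aux_pow_pow_minpoly (p : ℕ) [Fact p.Prime] (x : AlgebraicClosure (ZMod p)) :
    x ^ p ^ (minpoly (ZMod p) x).natDegree = x := by
  have hint : IsIntegral (ZMod p) x := Algebra.IsIntegral.isIntegral x
  haveI := IntermediateField.adjoin.finiteDimensional hint
  haveI : Finite ((ZMod p)⟮x⟯) := Module.finite_of_finite (ZMod p)
  haveI : Fintype ((ZMod p)⟮x⟯) := Fintype.ofFinite _
  have hcard : Fintype.card ((ZMod p)⟮x⟯) = p ^ (minpoly (ZMod p) x).natDegree := by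
    rw [Module.card_eq_pow_finrank (K := ZMod p), ZMod.card, IntermediateField.adjoin.finrank hint]
  have hg := FiniteField.pow_card (AdjoinSimple.gen (ZMod p) x)
  rw [hcard] at hg
  have := congrArg (algebraMap ((ZMod p)⟮x⟯) (AlgebraicClosure (ZMod p))) hg
  rwa [map_pow, AdjoinSimple.algebraMap_gen] at this

lemma aux_prod_sub_eq (p : ℕ) [Fact p.Prime] (α : AlgebraicClosure (ZMod p)) :
    ∏ c : ZMod p, (α - algebraMap (ZMod p) _ c) = α ^ p - α := by
  have hp1 : 1 < p := (Fact.out : p.Prime).one_lt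
  have hq : Fintype.card (ZMod p) = p := ZMod.card p
  have hmonic : (X ^ p - X : (ZMod p)[X]).Monic := by
    refine (monic_X_pow p).sub_of_left ?_
    rw [degree_X_pow]
    calc degree (X : (ZMod p)[X]) ≤ 1 := degree_X_le
    _ < (p : WithBot ℕ) := by exact_mod_cast hp1
  have hroots : (X ^ p - X : (ZMod p)[X]).roots = Finset.univ.val := by
    have := FiniteField.roots_X_pow_card_sub_X (ZMod p)
    rwa [hq] at this
  have hcard : Multiset.card (X ^ p - X : (ZMod p)[X]).roots
      = (X ^ p - X : (ZMod p)[X]).natDegree := by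
    rw [hroots, FiniteField.X_pow_card_sub_X_natDegree_eq _ hp1]
    simp [hq]
  have h1 := Polynomial.C_leadingCoeff_mul_prod_multiset_X_sub_C hcard
  rw [hmonic.leadingCoeff, map_one, one_mul, hroots] at h1
  have h2 := congrArg (aeval α) h1.symm
  rw [map_sub, map_pow, aeval_X, map_multiset_prod, Multiset.map_map] at h2
  rw [Finset.prod_eq_multiset_prod, h2]
  congr 1
  exact Multiset.map_congr rfl (fun c _ => by simp)

/-- Theorem, part 1: with `e` the multiplicative order of a root of `X^p - X - 1` over `𝔽_p`
and `ℓ` an odd prime dividing `e` but not `(p^p - 1)/e`, the polynomial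
`X^(pℓ^m) - X^(ℓ^m) + a` is irreducible over `𝔽_p` for every `m ≥ 0` and `a ∈ 𝔽_p^×`.
These polynomials are monic of common odd degree `p·ℓ^m` and any two of them differ by a
nonzero constant. -/
theorem twin_prime_tuples_odd_degree
    (p : ℕ) [Fact p.Prime] (hpodd : Odd p)
    (α : AlgebraicClosure (ZMod p)) (hα : α ^ p - α - 1 = 0)
    (e : ℕ) (he : e = orderOf α)
    (ℓ : ℕ) (hℓ : ℓ.Prime) (hℓodd : Odd ℓ) (hdvd : ℓ ∣ e)
    (hnd : ¬ ℓ ∣ (p ^ p - 1) / e) (m : ℕ) (a : (ZMod p)ˣ) :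
    Irreducible (X ^ (p * ℓ ^ m) - X ^ ℓ ^ m + C (a : ZMod p) : (ZMod p)[X]) ∧
    (X ^ (p * ℓ ^ m) - X ^ ℓ ^ m + C (a : ZMod p) : (ZMod p)[X]).Monic ∧
    (X ^ (p * ℓ ^ m) - X ^ ℓ ^ m + C (a : ZMod p) : (ZMod p)[X]).natDegree = p * ℓ ^ m ∧
    Odd (p * ℓ ^ m) ∧
    ∀ b : (ZMod p)ˣ, a ≠ b →
      (X ^ (p * ℓ ^ m) - X ^ ℓ ^ m + C (a : ZMod p) : (ZMod p)[X]) -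
          (X ^ (p * ℓ ^ m) - X ^ ℓ ^ m + C (b : ZMod p)) = C ((a : ZMod p) - b) ∧
        (a : ZMod p) - (b : ZMod p) ≠ 0 := by
  haveI : Fact ℓ.Prime := ⟨hℓ⟩
  set ι : ZMod p →+* AlgebraicClosure (ZMod p) := algebraMap (ZMod p) _ with hι
  have hp : p.Prime := Fact.out
  have hp1 : 1 < p := hp.one_lt
  haveI : CharP (AlgebraicClosure (ZMod p)) p := charP_of_injective_algebraMap ι.injective p
  have hαp : α ^ p = α + 1 := by
    exact sub_eq_zero.mp (show α ^ p - (α + 1) = 0 by rw [← hα]; ring)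
  have hconst : ∀ (y : ZMod p) (n : ℕ), (ι y) ^ p ^ n = ι y := by
    intro y n
    induction n with
    | zero => simp
    | succ n ih => rw [pow_succ, pow_mul, ih, ← map_pow, ZMod.pow_card]
  have hnatpow : ∀ n : ℕ, ((n : AlgebraicClosure (ZMod p))) ^ p = (n : AlgebraicClosure (ZMod p)) := by
    intro n
    have h : ((n : AlgebraicClosure (ZMod p))) = ι ((n : ZMod p)) := by simp [hι]
    rw [h, ← map_pow, ZMod.pow_card]
  have frobn : ∀ n : ℕ, α ^ p ^ n = α + (n : AlgebraicClosure (ZMod p)) := by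
    intro n
    induction n with
    | zero => simp
    | succ n ih =>
      rw [pow_succ, pow_mul, ih, add_pow_char, hαp, hnatpow]
      push_cast
      ring
  have hα0 : α ≠ 0 := by
    intro h
    rw [h] at hα
    simp [zero_pow hp.ne_zero] at hα
  have hppow_pos : 0 < p ^ p - 1 := by
    have : 1 < p ^ p := Nat.one_lt_pow hp.ne_zero hp1
    omega
  have hαpp : α ^ (p ^ p - 1) = 1 := by
    have h1 : α ^ p ^ p = α := by rw [frobn p]; simp
    have h2 : α ^ (p ^ p - 1) * α = 1 * α := by
      rw [one_mul, ← pow_succ, Nat.sub_add_cancel (by omega)]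
      exact h1
    exact mul_right_cancel₀ hα0 h2
  have he_dvd : e ∣ p ^ p - 1 := he ▸ orderOf_dvd_of_pow_eq_one hαpp
  have he0 : e ≠ 0 := by
    rintro rfl
    rw [zero_dvd_iff] at he_dvd
    omega
  have hℓ_ne_p : ℓ ≠ p := by
    intro hEq
    have h1 : ℓ ∣ p ^ p - 1 := hdvd.trans he_dvd
    have h2 : ℓ ∣ p ^ p := hEq ▸ dvd_pow_self p hp.ne_zero
    have h3 := Nat.dvd_sub h2 h1
    rw [Nat.sub_sub_self (by omega : 1 ≤ p ^ p)] at h3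
    exact hℓ.one_lt.ne' (Nat.dvd_one.mp h3)
  have hℓ_ndvd_pp : ¬ ℓ ∣ p ^ p := fun h => hℓ_ne_p ((Nat.prime_dvd_prime_iff_eq hℓ hp).mp (hℓ.dvd_of_dvd_pow h))
  -- norm argument: e divides the sum of powers
  have hsum : α ^ (∑ j ∈ Finset.range p, p ^ j) = 1 := by
    rw [← Finset.prod_pow_eq_pow_sum]
    have h1 : ∀ j ∈ Finset.range p, α ^ p ^ j = α + ι ((j : ZMod p)) := by
      intro j _
      rw [frobn j]; simp [hι]
    rw [Finset.prod_congr rfl h1]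
    have h2 : ∏ j ∈ Finset.range p, (α + ι ((j : ZMod p))) = ∏ c : ZMod p, (α + ι c) := by
      refine Finset.prod_nbij' (fun j => ((j : ZMod p))) (fun c => c.val) ?_ ?_ ?_ ?_ ?_
      · intros; exact Finset.mem_univ _
      · intro c _; exact Finset.mem_range.mpr (ZMod.val_lt c)
      · intro j hj; exact ZMod.val_natCast_of_lt (Finset.mem_range.mp hj)
      · intro c _; exact ZMod.natCast_rightInverse c
      · intros; rfl
    rw [h2]
    have h3 : ∏ c : ZMod p, (α + ι c) = ∏ c : ZMod p, (α - ι c) := by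
      refine Fintype.prod_equiv (Equiv.neg (ZMod p)) _ _ (fun c => ?_)
      simp [sub_neg_eq_add]
    rw [h3, aux_prod_sub_eq, hαp]
    ring
  have he_dvd_sum : e ∣ ∑ j ∈ Finset.range p, p ^ j := he ▸ orderOf_dvd_of_pow_eq_one hsum
  have hℓ_nd_p1 : ¬ ℓ ∣ (p - 1) := by
    intro hcon
    have hs : ℓ ∣ ∑ j ∈ Finset.range p, p ^ j := hdvd.trans he_dvd_sum
    have hcast : ((∑ j ∈ Finset.range p, p ^ j : ℕ) : ZMod ℓ) = 0 :=
      (ZMod.natCast_eq_zero_iff _ _).mpr hs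
    have hp_one : ((p : ℕ) : ZMod ℓ) = 1 := by
      have h0 : (((p - 1 : ℕ)) : ZMod ℓ) = 0 := (ZMod.natCast_eq_zero_iff _ _).mpr hcon
      rw [Nat.cast_sub (by omega), Nat.cast_one] at h0
      exact sub_eq_zero.mp h0
    rw [Nat.cast_sum] at hcast
    simp only [Nat.cast_pow, hp_one, one_pow, Finset.sum_const, Finset.card_range, nsmul_eq_mul, mul_one] at hcast
    exact one_ne_zero hcast
  -- the ℓ-adic valuation of p^p - 1
  set ν := padicValNat ℓ (p ^ p - 1) with hν
  have hν_pos : 1 ≤ ν := one_le_padicValNat_of_dvd hppow_pos.ne' (hdvd.trans he_dvd)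
  have hν_dvd_e : ℓ ^ ν ∣ e := by
    have hc0 : (p ^ p - 1) / e ≠ 0 :=
      (Nat.div_pos (Nat.le_of_dvd hppow_pos he_dvd) (Nat.pos_of_ne_zero he0)).ne'
    have hmul : p ^ p - 1 = e * ((p ^ p - 1) / e) := (Nat.mul_div_cancel' he_dvd).symm
    have hval : ν = padicValNat ℓ e + padicValNat ℓ ((p ^ p - 1) / e) := by
      rw [hν]
      conv_lhs => rw [hmul]
      rw [padicValNat.mul he0 hc0]
    rw [padicValNat.eq_zero_of_not_dvd hnd, add_zero] at hval
    exact hval ▸ pow_padicValNat_dvd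
  -- the root β of X^p - X + a
  set x : AlgebraicClosure (ZMod p) := ι ((a : ZMod p)) with hx
  have hx0 : x ≠ 0 := by
    rw [hx]
    intro h
    exact a.ne_zero (ι.injective (by rw [h, map_zero]))
  have hxp : ∀ n : ℕ, x ^ p ^ n = x := fun n => hconst _ n
  have hnegxp : ∀ n : ℕ, (-x) ^ p ^ n = -x := by
    intro n
    rw [Odd.neg_pow (hpodd.pow), hxp]
  set β : AlgebraicClosure (ZMod p) := -x * α with hβ
  have hβ0 : β ≠ 0 := mul_ne_zero (neg_ne_zero.mpr hx0) hα0
  have hβp : β ^ p = β - x := by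
    rw [hβ, mul_pow, Odd.neg_pow hpodd, hx, ← map_pow, ZMod.pow_card, hαp]
    ring
  have hβpp : ∀ n : ℕ, β ^ p ^ n = β - x * (n : AlgebraicClosure (ZMod p)) := by
    intro n
    rw [hβ, mul_pow, hnegxp, frobn]
    ring
  have hβfin : β ^ (p ^ p - 1) = 1 := by
    have h1 : β ^ p ^ p = β := by
      rw [hβpp p]
      simp
    have h2 : β ^ (p ^ p - 1) * β = 1 * β := by
      rw [one_mul, ← pow_succ, Nat.sub_add_cancel (by omega)]
      exact h1
    exact mul_right_cancel₀ hβ0 h2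
  have hoβ_dvd : orderOf β ∣ p ^ p - 1 := orderOf_dvd_of_pow_eq_one hβfin
  have hoβ0 : orderOf β ≠ 0 := by
    intro h
    rw [h, zero_dvd_iff] at hoβ_dvd
    omega
  -- ℓ ^ ν divides the order of β
  have hν_dvd_oβ : ℓ ^ ν ∣ orderOf β := by
    have h1 : α ^ (orderOf β * (p - 1)) = 1 := by
      have hβo : (-x) ^ orderOf β * α ^ orderOf β = 1 := by
        rw [← mul_pow, ← hβ]
        exact pow_orderOf_eq_one β
      have hx1 : ((-x) ^ (p - 1)) = 1 := by
        have : (-x) = ι (-(a : ZMod p)) := by simp [hx]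
        rw [this, ← map_pow, ZMod.pow_card_sub_one_eq_one (neg_ne_zero.mpr a.ne_zero), map_one]
      calc α ^ (orderOf β * (p - 1)) = ((-x) ^ (p-1)) ^ orderOf β * α ^ (orderOf β * (p-1)) := by
            rw [hx1, one_pow, one_mul]
      _ = ((-x) ^ orderOf β * α ^ orderOf β) ^ (p - 1) := by
            rw [mul_pow, ← pow_mul, ← pow_mul, ← pow_mul, mul_comm (p-1) (orderOf β)]
      _ = 1 := by rw [hβo, one_pow]
    have h2 : e ∣ orderOf β * (p - 1) := he ▸ orderOf_dvd_of_pow_eq_one h1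
    have h3 : ℓ ^ ν ∣ orderOf β * (p - 1) := hν_dvd_e.trans h2
    have hcop : Nat.Coprime (ℓ ^ ν) (p - 1) :=
      Nat.Coprime.pow_left _ ((Nat.Prime.coprime_iff_not_dvd hℓ).mpr hℓ_nd_p1)
    exact hcop.dvd_of_dvd_mul_right h3
  -- the root γ with γ^(ℓ^m) = β
  have hℓm_pos : 0 < ℓ ^ m := pow_pos hℓ.pos m
  obtain ⟨γ, hγ⟩ := IsAlgClosed.exists_pow_nat_eq β hℓm_pos
  have hγ0 : γ ≠ 0 := by
    intro h
    rw [h, zero_pow hℓm_pos.ne'] at hγ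
    exact hβ0 hγ.symm
  have hγint : IsIntegral (ZMod p) γ := Algebra.IsIntegral.isIntegral γ
  set d := (minpoly (ZMod p) γ).natDegree with hd
  have hd_pos : 0 < d := minpoly.natDegree_pos hγint
  have hγpd : γ ^ p ^ d = γ := aux_pow_pow_minpoly p γ
  have hpd_pos : 0 < p ^ d - 1 := by
    have : 1 < p ^ d := Nat.one_lt_pow hd_pos.ne' hp1
    omega
  have hγfin : γ ^ (p ^ d - 1) = 1 := by
    have h2 : γ ^ (p ^ d - 1) * γ = 1 * γ := by
      rw [one_mul, ← pow_succ, Nat.sub_add_cancel (by omega)]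
      exact hγpd
    exact mul_right_cancel₀ hγ0 h2
  have hoγ_dvd : orderOf γ ∣ p ^ d - 1 := orderOf_dvd_of_pow_eq_one hγfin
  have hoγ0 : orderOf γ ≠ 0 := by
    intro h
    rw [h, zero_dvd_iff] at hoγ_dvd
    omega
  -- order of γ has full ℓ-part
  have hβγ : orderOf β = orderOf γ / Nat.gcd (orderOf γ) (ℓ ^ m) := by
    rw [← hγ, orderOf_pow' γ hℓm_pos.ne']
  have hgcd_dvd : Nat.gcd (orderOf γ) (ℓ ^ m) ∣ orderOf γ := Nat.gcd_dvd_left _ _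
  have hprod : orderOf β * Nat.gcd (orderOf γ) (ℓ ^ m) = orderOf γ := by
    rw [hβγ, Nat.div_mul_cancel hgcd_dvd]
  have hν_m_dvd : ℓ ^ (ν + m) ∣ orderOf γ := by
    obtain ⟨j, hj_le, hj⟩ := (Nat.dvd_prime_pow hℓ).mp (Nat.gcd_dvd_right (orderOf γ) (ℓ ^ m))
    rcases eq_or_lt_of_le hj_le with hjm | hjm
    · rw [← hprod, hj, hjm, pow_add]
      exact mul_dvd_mul hν_dvd_oβ dvd_rfl
    · exfalso
      have h1 : ℓ ^ (j + 1) ∣ orderOf γ := by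
        rw [← hprod, hj, pow_succ']
        exact mul_dvd_mul (dvd_trans (dvd_pow_self ℓ (Nat.one_le_iff_ne_zero.mp hν_pos)) hν_dvd_oβ) dvd_rfl
      have h2 : ℓ ^ (j + 1) ∣ ℓ ^ m := pow_dvd_pow ℓ hjm
      have h3 : ℓ ^ (j + 1) ∣ Nat.gcd (orderOf γ) (ℓ ^ m) := Nat.dvd_gcd h1 h2
      rw [hj] at h3
      have := Nat.le_of_dvd (pow_pos hℓ.pos j) h3
      exact absurd this (Nat.not_le.mpr (Nat.pow_lt_pow_right hℓ.one_lt (Nat.lt_succ_self j)))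
  -- p divides d
  have hβpd : β ^ p ^ d = β := by
    rw [← hγ, ← pow_mul, mul_comm, pow_mul, hγpd]
  have hp_dvd_d : p ∣ d := by
    have h1 : β ^ p ^ d = β - x * (d : AlgebraicClosure (ZMod p)) := hβpp d
    rw [hβpd] at h1
    have h2 : x * (d : AlgebraicClosure (ZMod p)) = 0 := by
      have := sub_eq_zero.mpr h1.symm
      linear_combination -this
    rcases mul_eq_zero.mp h2 with h | h
    · exact absurd h hx0
    · exact (CharP.cast_eq_zero_iff _ p d).mp h
  -- the polynomial P
  set P : (ZMod p)[X] := X ^ (p * ℓ ^ m) - X ^ ℓ ^ m + C ((a : ZMod p)) with hP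
  have htN : ℓ ^ m < p * ℓ ^ m := by nlinarith [hℓm_pos]
  have hPeq : P = X ^ (p * ℓ ^ m) + (C ((a : ZMod p)) - X ^ ℓ ^ m) := by rw [hP]; ring
  have hqdeg : degree (C ((a : ZMod p)) - X ^ ℓ ^ m : (ZMod p)[X]) < degree (X ^ (p * ℓ ^ m) : (ZMod p)[X]) := by
    rw [degree_X_pow]
    refine (degree_sub_le _ _).trans_lt (max_lt ?_ ?_)
    · exact (degree_C_le).trans_lt (by exact_mod_cast (show 0 < p * ℓ ^ m by positivity))
    · rw [degree_X_pow]
      exact_mod_cast htN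
  have hPmonic : P.Monic := by
    rw [hPeq]
    exact (monic_X_pow _).add_of_left hqdeg
  have hPdeg : P.natDegree = p * ℓ ^ m := by
    have h1 : P.degree = ((p * ℓ ^ m : ℕ) : WithBot ℕ) := by
      rw [hPeq, degree_add_eq_left_of_degree_lt hqdeg, degree_X_pow]
    exact natDegree_eq_of_degree_eq_some h1
  have hP0 : P ≠ 0 := hPmonic.ne_zero
  have haeval : aeval γ P = 0 := by
    rw [hP]
    simp only [map_add, map_sub, map_pow, aeval_X, aeval_C]
    rw [mul_comm p (ℓ ^ m), pow_mul, hγ, hβp]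
    show β - x - β + ι ((a : ZMod p)) = 0
    rw [← hx]
    ring
  have hmin_dvd : minpoly (ZMod p) γ ∣ P := minpoly.dvd _ _ haeval
  have hd_le : d ≤ p * ℓ ^ m := hPdeg ▸ natDegree_le_of_dvd hmin_dvd hP0
  -- lower bound on d via lifting the exponent
  set k := d / p with hk
  have hdk : d = p * k := (Nat.mul_div_cancel' hp_dvd_d).symm
  have hk0 : k ≠ 0 := by
    intro h
    rw [h, mul_zero] at hdk
    omega
  have hpp1 : 1 < p ^ p := Nat.one_lt_pow hp.ne_zero hp1
  have hLTE := padicValNat.pow_sub_pow (p := ℓ) hℓodd (x := p ^ p) (y := 1) hpp1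
    (by simpa using hdvd.trans he_dvd) hℓ_ndvd_pp hk0
  have hpow_eq : p ^ d = (p ^ p) ^ k := by rw [hdk, pow_mul]
  have h4 : ℓ ^ (ν + m) ∣ (p ^ p) ^ k - 1 ^ k := by
    rw [one_pow, ← hpow_eq]
    exact hν_m_dvd.trans hoγ_dvd
  have h5 : ν + m ≤ ν + padicValNat ℓ k := by
    have h6 : (p ^ p) ^ k - 1 ^ k ≠ 0 := by
      rw [one_pow, ← hpow_eq]
      omega
    have := (padicValNat_dvd_iff_le h6).mp h4
    rwa [hLTE] at this
  have hm_le : m ≤ padicValNat ℓ k := by omega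
  have hℓm_dvd_k : ℓ ^ m ∣ k := (pow_dvd_pow ℓ hm_le).trans pow_padicValNat_dvd
  have hk_ge : ℓ ^ m ≤ k := Nat.le_of_dvd (Nat.pos_of_ne_zero hk0) hℓm_dvd_k
  have hd_ge : p * ℓ ^ m ≤ d := by
    rw [hdk]
    exact Nat.mul_le_mul_left p hk_ge
  have hd_eq : d = p * ℓ ^ m := le_antisymm hd_le hd_ge
  -- P is the minimal polynomial of γ
  have hP_min : P = minpoly (ZMod p) γ :=
    eq_of_monic_of_dvd_of_natDegree_le (minpoly.monic hγint) hPmonic hmin_dvd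
      (by rw [hPdeg, ← hd_eq])
  have hPirr : Irreducible P := hP_min ▸ minpoly.irreducible hγint
  refine ⟨hPirr, hPmonic, hPdeg, hpodd.mul (hℓodd.pow), fun b hab => ⟨by rw [map_sub]; ring, ?_⟩⟩
  exact sub_ne_zero.mpr (fun h => hab (Units.ext h))
end

section
/- (Theorem, part 2) Let p be an odd prime, let e be the multiplicative order of any root of f(X) = X^p - X - 1 in an algebraic closure of 𝔽_p, and let ℓ be an odd prime dividing e. If ℓ divides (p^p - 1)/e, then ℓ is a Wieferich prime in base p; that is, p^(ℓ-1) ≡ 1 (mod ℓ²). -/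
-- iterated Frobenius on a root of X^p - X - 1
lemma as_pow (p : ℕ) [Fact p.Prime]
    (α : AlgebraicClosure (ZMod p)) (hα : α ^ p - α - 1 = 0) :
    ∀ k : ℕ, α ^ (p ^ k) = α + k := by
  have hαp : α ^ p = α + 1 := by linear_combination hα
  intro k
  induction k with
  | zero => simp
  | succ k ih =>
      have h1 : α ^ (p ^ (k+1)) = (α ^ (p ^ k)) ^ p := by
        rw [← pow_mul, pow_succ]
      rw [h1, ih]
      have hp : (α + (k : AlgebraicClosure (ZMod p))) ^ p
          = α ^ p + (k : AlgebraicClosure (ZMod p)) ^ p := add_pow_char _ _ _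
      have hk : (k : AlgebraicClosure (ZMod p)) ^ p = (k : AlgebraicClosure (ZMod p)) := by
        rw [← frobenius_def]
        exact map_natCast (frobenius (AlgebraicClosure (ZMod p)) p) k
      rw [hp, hk, hαp]
      push_cast
      ring

/-- Theorem, part 2: with `e` the multiplicative order of a root of `X^p - X - 1` over `𝔽_p`
and `ℓ` an odd prime dividing `e`, if `ℓ ∣ (p^p - 1)/e` then `ℓ` is a Wieferich prime in
base `p`, i.e., `p^(ℓ-1) ≡ 1 (mod ℓ²)`. -/
theorem wieferich_obstruction
    (p : ℕ) [Fact p.Prime] (hpodd : Odd p)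
    (α : AlgebraicClosure (ZMod p)) (hα : α ^ p - α - 1 = 0)
    (e : ℕ) (he : e = orderOf α)
    (ℓ : ℕ) (hℓ : ℓ.Prime) (hℓodd : Odd ℓ) (hdvd : ℓ ∣ e)
    (hd : ℓ ∣ (p ^ p - 1) / e) :
    p ^ (ℓ - 1) ≡ 1 [MOD ℓ ^ 2] := by
  have hp : p.Prime := Fact.out
  have hp2 : 2 ≤ p := hp.two_le
  -- α ≠ 0
  have hα0 : α ≠ 0 := by
    intro h
    rw [h, zero_pow hp.pos.ne'] at hα
    simp at hα
  -- α ^ (p^p) = α, so α ^ (p^p - 1) = 1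
  have hfix : α ^ (p ^ p) = α := by
    rw [as_pow p α hα p]; simp
  have hpp1 : 1 ≤ p ^ p := Nat.one_le_pow _ _ (by omega)
  have hroot : α ^ (p ^ p - 1) = 1 := by
    have h2 : α ^ (p ^ p - 1) * α = 1 * α := by
      rw [one_mul, ← pow_succ, Nat.sub_add_cancel hpp1, hfix]
    exact mul_right_cancel₀ hα0 h2
  have hedvd : e ∣ p ^ p - 1 := he ▸ orderOf_dvd_of_pow_eq_one hroot
  -- ℓ² ∣ p^p - 1
  have hsq : ℓ ^ 2 ∣ p ^ p - 1 := by
    obtain ⟨a, ha⟩ := hdvd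
    obtain ⟨b, hb⟩ := hd
    have heq : p ^ p - 1 = e * ((p ^ p - 1) / e) := (Nat.mul_div_cancel' hedvd).symm
    exact ⟨a * b, by rw [heq, hb, ha]; ring⟩
  -- ℓ ≠ p
  have hℓdvd' : ℓ ∣ p ^ p - 1 := hdvd.trans hedvd
  have hℓnep : ℓ ≠ p := by
    rintro rfl
    have h1 : ℓ ∣ ℓ ^ ℓ := dvd_pow_self ℓ hℓ.pos.ne'
    have h3 : ℓ ∣ ℓ ^ ℓ - (ℓ ^ ℓ - 1) := Nat.dvd_sub h1 hℓdvd'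
    have h0 : 1 ≤ ℓ ^ ℓ := Nat.one_le_pow _ _ hℓ.pos
    have h4 : ℓ ^ ℓ - (ℓ ^ ℓ - 1) = 1 := by omega
    rw [h4] at h3
    have := Nat.le_of_dvd one_pos h3
    have := hℓ.two_le
    omega
  -- work in ZMod (ℓ²)
  have hL : (1:ℕ) < ℓ ^ 2 := Nat.one_lt_pow (by norm_num) hℓ.one_lt
  haveI : NeZero (ℓ ^ 2) := ⟨by positivity⟩
  have hmod : p ^ p ≡ 1 [MOD ℓ ^ 2] := ((Nat.modEq_iff_dvd' hpp1).mpr hsq).symm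
  have hz : ((p : ZMod (ℓ ^ 2)) ^ p = 1) := by
    have := (ZMod.natCast_eq_natCast_iff _ _ _).mpr hmod
    push_cast at this
    exact this
  have hup : IsUnit ((p : ZMod (ℓ ^ 2))) := by
    exact IsUnit.of_pow_eq_one hz hp.pos.ne'
  set d := orderOf ((p : ZMod (ℓ ^ 2))) with hdd
  have hdp : d ∣ p := orderOf_dvd_of_pow_eq_one hz
  have hdtot : d ∣ ℓ * (ℓ - 1) := by
    obtain ⟨u, hu⟩ := hup
    have h5 : orderOf u = d := by rw [hdd, ← hu, orderOf_units]
    have h6 : orderOf u ∣ Fintype.card (ZMod (ℓ ^ 2))ˣ := orderOf_dvd_card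
    rw [h5, ZMod.card_units_eq_totient, Nat.totient_prime_pow hℓ (by norm_num)] at h6
    simpa using h6
  have hdl1 : d ∣ ℓ - 1 := by
    rcases (Nat.Prime.eq_one_or_self_of_dvd hp d hdp) with h | h
    · simp [h]
    · have hc : Nat.Coprime p ℓ := (Nat.coprime_primes hp hℓ).mpr (Ne.symm hℓnep)
      have hpl1 : p ∣ ℓ - 1 := hc.dvd_of_dvd_mul_left (h ▸ hdtot)
      exact h ▸ hpl1
  have hfin : ((p : ZMod (ℓ ^ 2)) ^ (ℓ - 1) = 1) := orderOf_dvd_iff_pow_eq_one.mp hdl1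
  have : ((p ^ (ℓ - 1) : ℕ) : ZMod (ℓ ^ 2)) = ((1 : ℕ) : ZMod (ℓ ^ 2)) := by
    push_cast; exact hfin
  exact (ZMod.natCast_eq_natCast_iff _ _ _).mp this
end

section
/- Let p be an odd prime, let e be the multiplicative order of any root of f(X) = X^p - X - 1 in an algebraic closure of 𝔽_p, and let ℓ be an odd prime dividing e such that ℓ does not divide (p^p - 1)/e. Then for every integer m ≥ 0, the polynomial f(X^(ℓ^m)) = X^(pℓ^m) - X^(ℓ^m) - 1 is irreducible over 𝔽_p. -/
open Polynomial IntermediateField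


variable (p : ℕ) [Fact p.Prime]

theorem aux_pow (α : AlgebraicClosure (ZMod p))
    (hα : α ^ p - α - 1 = 0) (n : ℕ) : α ^ (p ^ n) = α + n := by
  have hαp : α ^ p = α + 1 := by linear_combination hα
  induction n with
  | zero => simp
  | succ n ih =>
    have hn : (n : AlgebraicClosure (ZMod p)) ^ p = n := by
      rw [← map_natCast (algebraMap (ZMod p) (AlgebraicClosure (ZMod p))), ← map_pow,
        ZMod.pow_card]
    calc α ^ p ^ (n + 1) = (α ^ p ^ n) ^ p := by rw [← pow_mul, pow_succ]
      _ = (α + n) ^ p := by rw [ih]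
      _ = α ^ p + (n : AlgebraicClosure (ZMod p)) ^ p := add_pow_char _ _ _
      _ = α + (n + 1 : ℕ) := by rw [hαp, hn]; push_cast; ring

theorem aux_f_monic : (X ^ p - X - 1 : (ZMod p)[X]).Monic := by
  have h2 := (Fact.out : p.Prime).one_lt
  have : (X ^ p - X - 1 : (ZMod p)[X]) = X ^ p - (X + 1) := by ring
  rw [this]
  apply monic_X_pow_sub
  refine lt_of_le_of_lt (degree_add_le _ _) ?_
  simp only [degree_X, degree_one, max_def]
  split <;> [exact_mod_cast (Fact.out : p.Prime).pos; exact_mod_cast h2]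

theorem aux_f_natDegree : (X ^ p - X - 1 : (ZMod p)[X]).natDegree = p := by
  have h2 := (Fact.out : p.Prime).one_lt
  have : (X ^ p - X - 1 : (ZMod p)[X]) = X ^ p - (X + 1) := by ring
  rw [this, natDegree_sub_eq_left_of_natDegree_lt, natDegree_X_pow]
  rw [natDegree_X_pow]
  exact lt_of_le_of_lt (natDegree_add_le _ _) (by simpa using h2)

theorem aux_root (α : AlgebraicClosure (ZMod p)) (hα : α ^ p - α - 1 = 0) :
    aeval α (X ^ p - X - 1 : (ZMod p)[X]) = 0 := by
  simpa using hα

theorem aux_int (α : AlgebraicClosure (ZMod p)) (hα : α ^ p - α - 1 = 0) :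
    IsIntegral (ZMod p) α :=
  ⟨X ^ p - X - 1, aux_f_monic p, by rw [← aeval_def]; exact aux_root p α hα⟩

theorem aux_deg (α : AlgebraicClosure (ZMod p)) (hα : α ^ p - α - 1 = 0) :
    (minpoly (ZMod p) α).natDegree = p := by
  let F := ZMod p
  let AC := AlgebraicClosure (ZMod p)
  have hint : IsIntegral F α := aux_int p α hα
  set d := (minpoly F α).natDegree with hd
  have hdvd : minpoly F α ∣ X ^ p - X - 1 := minpoly.dvd F α (aux_root p α hα)
  have hdle : d ≤ p := by
    have := natDegree_le_of_dvd hdvd (aux_f_monic p).ne_zero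
    rwa [aux_f_natDegree] at this
  have hd0 : 0 < d := minpoly.natDegree_pos hint
  -- show α ^ p ^ d = α via the finite field F⟮α⟯
  haveI : FiniteDimensional F F⟮α⟯ := adjoin.finiteDimensional hint
  haveI : Finite F⟮α⟯ := Module.finite_of_finite F
  haveI : Fintype F⟮α⟯ := Fintype.ofFinite _
  have hcard : Fintype.card F⟮α⟯ = p ^ d := by
    rw [Module.card_eq_pow_finrank (K := F), ZMod.card, adjoin.finrank hint]
  have hpc : (AdjoinSimple.gen F α) ^ (p ^ d) = AdjoinSimple.gen F α := by
    rw [← hcard]; exact FiniteField.pow_card _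
  have hαd : α ^ (p ^ d) = α := by
    have := congrArg (algebraMap F⟮α⟯ AC) hpc
    rwa [map_pow, AdjoinSimple.algebraMap_gen] at this
  rw [aux_pow p α hα] at hαd
  have hc : (d : AC) = 0 := by
    have := sub_eq_zero.mpr hαd.symm
    linear_combination -this
  have hpd : p ∣ d := (CharP.cast_eq_zero_iff AC p d).mp hc
  exact Nat.le_antisymm hdle (Nat.le_of_dvd hd0 hpd)


/-- With `e` the multiplicative order of a root of `X^p - X - 1` over `𝔽_p` and `ℓ` an odd
prime dividing `e` but not `(p^p - 1)/e`, the polynomial `X^(pℓ^m) - X^(ℓ^m) - 1` is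
irreducible over `𝔽_p` for every `m ≥ 0`. -/
theorem f_comp_pow_irreducible
    (p : ℕ) [Fact p.Prime] (hpodd : Odd p)
    (α : AlgebraicClosure (ZMod p)) (hα : α ^ p - α - 1 = 0)
    (e : ℕ) (he : e = orderOf α)
    (ℓ : ℕ) (hℓ : ℓ.Prime) (hℓodd : Odd ℓ) (hdvd : ℓ ∣ e)
    (hnd : ¬ ℓ ∣ (p ^ p - 1) / e) (m : ℕ) :
    Irreducible (X ^ (p * ℓ ^ m) - X ^ ℓ ^ m - 1 : (ZMod p)[X]) := by
  have hp := (Fact.out : p.Prime)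
  have hℓm0 : ℓ ^ m ≠ 0 := pow_ne_zero m hℓ.pos.ne'
  have hint : IsIntegral (ZMod p) α := aux_int p α hα
  have hα0 : α ≠ 0 := by
    rintro rfl
    rw [zero_pow hp.pos.ne'] at hα
    simp at hα
  have hNpos : 0 < p ^ p - 1 := by
    have : 1 < p ^ p := Nat.one_lt_pow hp.pos.ne' hp.one_lt
    omega
  haveI : FiniteDimensional (ZMod p) (ZMod p)⟮α⟯ := adjoin.finiteDimensional hint
  haveI : Finite (ZMod p)⟮α⟯ := Module.finite_of_finite (ZMod p)
  haveI : Fintype (ZMod p)⟮α⟯ := Fintype.ofFinite _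
  have hcard : Fintype.card (ZMod p)⟮α⟯ = p ^ p := by
    rw [Module.card_eq_pow_finrank (K := ZMod p), ZMod.card, adjoin.finrank hint, aux_deg p α hα]
  have key : ∀ x : AlgebraicClosure (ZMod p), x ∈ (ZMod p)⟮α⟯ → x ≠ 0 →
      x ^ (p ^ p - 1) = 1 := by
    intro x hx hx0
    have h1 : (⟨x, hx⟩ : (ZMod p)⟮α⟯) ^ (p ^ p) = ⟨x, hx⟩ := by
      rw [← hcard]; exact FiniteField.pow_card _
    have h2 : x ^ (p ^ p) = x := congrArg Subtype.val h1
    have h3 : x ^ (p ^ p - 1) * x = x ^ (p ^ p) := by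
      rw [← pow_succ, Nat.sub_add_cancel (Nat.one_le_pow _ _ hp.pos)]
    have h4 : x ^ (p ^ p - 1) * x = 1 * x := by rw [h3, h2, one_mul]
    exact mul_right_cancel₀ hx0 h4
  have hαN : α ^ (p ^ p - 1) = 1 := key α (mem_adjoin_simple_self _ α) hα0
  have heN : e ∣ p ^ p - 1 := he ▸ orderOf_dvd_of_pow_eq_one hαN
  have hefin : IsOfFinOrder α := isOfFinOrder_iff_pow_eq_one.mpr ⟨_, hNpos, hαN⟩
  have hepos : 0 < e := he ▸ hefin.orderOf_pos
  -- α is not an ℓ-th power in F⟮α⟯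
  have ha : ∀ b : (ZMod p)⟮α⟯, b ^ ℓ ≠ AdjoinSimple.gen (ZMod p) α := by
    intro b hb
    have hbα : (b : AlgebraicClosure (ZMod p)) ^ ℓ = α := congrArg Subtype.val hb
    have hb0 : (b : AlgebraicClosure (ZMod p)) ≠ 0 := by
      intro h
      exact hα0 (by rw [← hbα, h, zero_pow hℓ.pos.ne'])
    have htN : (b : AlgebraicClosure (ZMod p)) ^ (p ^ p - 1) = 1 := key _ b.2 hb0
    have htdvd : orderOf (b : AlgebraicClosure (ZMod p)) ∣ p ^ p - 1 :=
      orderOf_dvd_of_pow_eq_one htN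
    have hoe : e = orderOf (b : AlgebraicClosure (ZMod p)) / Nat.gcd
        (orderOf (b : AlgebraicClosure (ZMod p))) ℓ := by
      have h5 : orderOf ((b : AlgebraicClosure (ZMod p)) ^ ℓ) =
          orderOf (b : AlgebraicClosure (ZMod p)) / Nat.gcd
          (orderOf (b : AlgebraicClosure (ZMod p))) ℓ := orderOf_pow' _ hℓ.pos.ne'
      rw [hbα] at h5
      rw [he, h5]
    have hedvd : e ∣ orderOf (b : AlgebraicClosure (ZMod p)) := by
      rw [hoe]; exact Nat.div_dvd_of_dvd (Nat.gcd_dvd_left _ _)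
    have hlt : ℓ ∣ orderOf (b : AlgebraicClosure (ZMod p)) := hdvd.trans hedvd
    have hgcd : Nat.gcd (orderOf (b : AlgebraicClosure (ZMod p))) ℓ = ℓ :=
      Nat.gcd_eq_right hlt
    rw [hgcd] at hoe
    have ht : orderOf (b : AlgebraicClosure (ZMod p)) = ℓ * e := by
      rw [hoe, Nat.mul_div_cancel' hlt]
    rw [ht] at htdvd
    obtain ⟨k, hk⟩ := htdvd
    apply hnd
    refine ⟨k, ?_⟩
    rw [hk, mul_comm ℓ e, mul_assoc, Nat.mul_div_cancel_left _ hepos]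
  have hℓ2 : ℓ ≠ 2 := by rintro rfl; rcases hℓodd with ⟨k, hk⟩; omega
  have irr1 : Irreducible (X ^ ℓ ^ m - C (AdjoinSimple.gen (ZMod p) α) :
      ((ZMod p)⟮α⟯)[X]) := X_pow_sub_C_irreducible_of_prime_pow hℓ hℓ2 m ha
  obtain ⟨β, hβ⟩ := IsAlgClosed.exists_pow_nat_eq α (Nat.pos_of_ne_zero hℓm0)
  have hroot : aeval β (X ^ ℓ ^ m - C (AdjoinSimple.gen (ZMod p) α) :
      ((ZMod p)⟮α⟯)[X]) = 0 := by
    rw [map_sub, aeval_X_pow, aeval_C, AdjoinSimple.algebraMap_gen, hβ, sub_self]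
  have hβintK : IsIntegral (ZMod p)⟮α⟯ β :=
    ⟨_, monic_X_pow_sub_C _ hℓm0, by rw [← aeval_def]; exact hroot⟩
  have hmin : minpoly (ZMod p)⟮α⟯ β = X ^ ℓ ^ m - C (AdjoinSimple.gen (ZMod p) α) :=
    (minpoly.eq_of_irreducible_of_monic irr1 hroot (monic_X_pow_sub_C _ hℓm0)).symm
  haveI : FiniteDimensional (ZMod p)⟮α⟯ ((ZMod p)⟮α⟯⟮β⟯) := adjoin.finiteDimensional hβintK
  have h2 : Module.finrank (ZMod p)⟮α⟯ ((ZMod p)⟮α⟯⟮β⟯) = ℓ ^ m := by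
    rw [adjoin.finrank hβintK, hmin, natDegree_X_pow_sub_C]
  have h1 : Module.finrank (ZMod p) (ZMod p)⟮α⟯ = p := by
    rw [adjoin.finrank hint, aux_deg p α hα]
  have hre : (IntermediateField.adjoin (ZMod p)⟮α⟯ {β}).restrictScalars (ZMod p) =
      (ZMod p)⟮β⟯ := by
    rw [IntermediateField.adjoin_adjoin_left]
    apply le_antisymm
    · rw [IntermediateField.adjoin_le_iff]
      refine Set.union_subset ?_ ?_ <;> rw [Set.singleton_subset_iff]
      · exact hβ ▸ pow_mem (mem_adjoin_simple_self _ β) _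
      · exact mem_adjoin_simple_self _ β
    · exact IntermediateField.adjoin.mono _ _ _ Set.subset_union_right
  have hfb : Module.finrank (ZMod p) (ZMod p)⟮β⟯ = p * ℓ ^ m := by
    rw [← hre]
    have h3 := Module.finrank_mul_finrank (ZMod p) (ZMod p)⟮α⟯ ((ZMod p)⟮α⟯⟮β⟯)
    rw [h1, h2] at h3
    exact h3.symm
  have hlt : ℓ ^ m < p * ℓ ^ m := by
    have h4 := hp.one_lt
    have h5 := Nat.pos_of_ne_zero hℓm0
    nlinarith
  have heq : (X ^ (p * ℓ ^ m) - X ^ ℓ ^ m - 1 : (ZMod p)[X]) =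
      X ^ (p * ℓ ^ m) - (X ^ ℓ ^ m + 1) := by ring
  have hgmonic : (X ^ (p * ℓ ^ m) - X ^ ℓ ^ m - 1 : (ZMod p)[X]).Monic := by
    rw [heq]
    apply monic_X_pow_sub
    refine lt_of_le_of_lt (degree_add_le _ _) ?_
    rw [degree_X_pow, degree_one]
    refine max_lt ?_ ?_
    · exact_mod_cast hlt
    · exact_mod_cast Nat.pos_of_ne_zero (Nat.mul_ne_zero hp.pos.ne' hℓm0)
  have hgdeg : (X ^ (p * ℓ ^ m) - X ^ ℓ ^ m - 1 : (ZMod p)[X]).natDegree = p * ℓ ^ m := by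
    rw [heq, natDegree_sub_eq_left_of_natDegree_lt, natDegree_X_pow]
    rw [natDegree_X_pow]
    refine lt_of_le_of_lt (natDegree_add_le _ _) ?_
    rw [natDegree_X_pow, natDegree_one]
    simpa using hlt
  have hβpow : β ^ (p * ℓ ^ m) = α ^ p := by rw [mul_comm, pow_mul, hβ]
  have hgroot : aeval β (X ^ (p * ℓ ^ m) - X ^ ℓ ^ m - 1 : (ZMod p)[X]) = 0 := by
    rw [map_sub, map_sub, aeval_X_pow, aeval_X_pow, map_one, hβpow, hβ]
    exact hα
  have hβint : IsIntegral (ZMod p) β := ⟨_, hgmonic, by rw [← aeval_def]; exact hgroot⟩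
  have hmd : (minpoly (ZMod p) β).natDegree = p * ℓ ^ m := by
    rw [← adjoin.finrank hβint]
    exact hfb
  have hfin : (X ^ (p * ℓ ^ m) - X ^ ℓ ^ m - 1 : (ZMod p)[X]) = minpoly (ZMod p) β :=
    Polynomial.eq_of_monic_of_dvd_of_natDegree_le (minpoly.monic hβint) hgmonic
      (minpoly.dvd _ _ hgroot) (by rw [hmd, hgdeg])
  rw [hfin]
  exact minpoly.irreducible hβint
end
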